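/- Let f : R -> R and \beta \ge 0 be such that x \mapsto f(x) + (\beta/2)x^2 is convex and \int e^f d\gamma_1 = 1, where \gamma_1 is the standard Gaussian measure on R. Then for all t \ge 1, \gamma_1(\{x : f(x) \ge t\}) \le ((1+\beta)/\sqrt{2}) e^{-t}/\sqrt{t}. -/

import Mathlib

open MeasureTheory Real Set

noncomputable def stdGaussian (n : ℕ) : Measure (EuclideanSpace ℝ (Fin n)) :=
  volume.withDensity (fun x => ENNReal.ofReal ((2 * π) ^ (-(n : ℝ) / 2) * Real.exp (-‖x‖ ^ 2 / 2)))

noncomputable def Phibar (s : ℝ) : ℝ :=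
  (Real.sqrt (2 * π))⁻¹ * ∫ x in Set.Ioi s, Real.exp (-x ^ 2 / 2)

open ProbabilityTheory Filter
open scoped ENNReal NNReal


lemma my_exists_subgradient {g : ℝ → ℝ} (hg : ConvexOn ℝ Set.univ g) (x₀ : ℝ) :
    ∃ c : ℝ, ∀ y, g x₀ + c * (y - x₀) ≤ g y := by
  set S : Set ℝ := (fun y => (g y - g x₀) / (y - x₀)) '' Ioi x₀ with hS
  have hne : S.Nonempty := ⟨_, mem_image_of_mem _ (show x₀ + 1 ∈ Ioi x₀ by simp)⟩
  have hbdd : BddBelow S := by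
    refine ⟨(g (x₀ - 1) - g x₀) / (x₀ - 1 - x₀), ?_⟩
    rintro _ ⟨y, hy, rfl⟩
    exact hg.secant_mono (mem_univ _) (mem_univ _) (mem_univ _) (by norm_num)
      (ne_of_gt (mem_Ioi.mp hy)) (by linarith [mem_Ioi.mp hy])
  refine ⟨sInf S, fun y => ?_⟩
  rcases lt_trichotomy y x₀ with h | h | h
  · have hle : (g y - g x₀) / (y - x₀) ≤ sInf S := by
      refine le_csInf hne ?_
      rintro _ ⟨z, hz, rfl⟩
      exact hg.secant_mono (mem_univ _) (mem_univ _) (mem_univ _) (ne_of_lt h)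
        (ne_of_gt (mem_Ioi.mp hz)) (by linarith [mem_Ioi.mp hz])
    rw [div_le_iff_of_neg (by linarith : y - x₀ < 0)] at hle
    linarith
  · simp [h]
  · have hge : sInf S ≤ (g y - g x₀) / (y - x₀) := csInf_le hbdd (mem_image_of_mem _ h)
    rw [le_div_iff₀ (by linarith : 0 < y - x₀)] at hge
    linarith

lemma my_sq_rewrite {b : ℝ} (hb : 0 < b) (c d : ℝ) (x : ℝ) :
    rexp (-b * x ^ 2 + c * x + d)
      = rexp (-b * (x - c / (2 * b)) ^ 2) * rexp (d + c ^ 2 / (4 * b)) := by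
  rw [← Real.exp_add]
  congr 1
  field_simp
  ring

lemma my_integral_exp_quadratic {b : ℝ} (hb : 0 < b) (c d : ℝ) :
    ∫ x : ℝ, rexp (-b * x ^ 2 + c * x + d)
      = Real.sqrt (π / b) * rexp (d + c ^ 2 / (4 * b)) := by
  simp_rw [my_sq_rewrite hb c d, integral_mul_const]
  rw [integral_sub_right_eq_self (fun x => rexp (-b * x ^ 2)) (c / (2 * b)),
    integral_gaussian]

lemma my_integrable_exp_quadratic {b : ℝ} (hb : 0 < b) (c d : ℝ) :
    Integrable (fun x : ℝ => rexp (-b * x ^ 2 + c * x + d)) := by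
  have h := (((integrable_exp_neg_mul_sq hb).comp_sub_right (c / (2 * b))).mul_const
    (rexp (d + c ^ 2 / (4 * b))))
  exact h.congr (by filter_upwards with x using (my_sq_rewrite hb c d x).symm)

lemma my_pdf_eq (x : ℝ) :
    gaussianPDFReal 0 1 x = (Real.sqrt (2 * π))⁻¹ * rexp (-x ^ 2 / 2) := by
  simp [gaussianPDFReal]

lemma my_gaussianReal_eq : gaussianReal 0 1
    = volume.withDensity (fun x => ((gaussianPDFReal 0 1 x).toNNReal : ℝ≥0∞)) := by
  rw [gaussianReal_of_var_ne_zero 0 one_ne_zero]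
  rfl

lemma my_integral_gaussianReal (h : ℝ → ℝ) :
    ∫ x, h x ∂(gaussianReal 0 1) = ∫ x, gaussianPDFReal 0 1 x * h x := by
  rw [my_gaussianReal_eq,
    integral_withDensity_eq_integral_smul (measurable_gaussianPDFReal 0 1).real_toNNReal h]
  congr 1
  ext x
  simp [NNReal.smul_def, Real.coe_toNNReal _ (gaussianPDFReal_nonneg 0 1 x)]

lemma my_integrable_gaussianReal_iff {h : ℝ → ℝ} :
    Integrable h (gaussianReal 0 1) ↔
      Integrable (fun x => gaussianPDFReal 0 1 x * h x) volume := by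
  rw [my_gaussianReal_eq,
    integrable_withDensity_iff_integrable_smul (measurable_gaussianPDFReal 0 1).real_toNNReal]
  constructor <;> intro hh <;> refine hh.congr (by
    filter_upwards with x
    simp [NNReal.smul_def, Real.coe_toNNReal _ (gaussianPDFReal_nonneg 0 1 x)])

lemma my_pdf_mul {β a c : ℝ} (x : ℝ) :
    gaussianPDFReal 0 1 x * rexp (a + c * x - β / 2 * x ^ 2)
      = (Real.sqrt (2 * π))⁻¹ * rexp (-((1 + β) / 2) * x ^ 2 + c * x + a) := by
  rw [my_pdf_eq, mul_assoc, ← Real.exp_add]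
  congr 2
  ring

lemma my_integrable_gauss_lin {β : ℝ} (hβ : 0 ≤ β) (a c : ℝ) :
    Integrable (fun x => rexp (a + c * x - β / 2 * x ^ 2)) (gaussianReal 0 1) := by
  rw [my_integrable_gaussianReal_iff]
  refine Integrable.congr ((my_integrable_exp_quadratic
    (show (0:ℝ) < (1 + β) / 2 by linarith) c a).const_mul ((Real.sqrt (2 * π))⁻¹)) ?_
  filter_upwards with x using (my_pdf_mul x).symm

lemma my_integral_gauss_lin {β : ℝ} (hβ : 0 ≤ β) (a c : ℝ) :
    ∫ x, rexp (a + c * x - β / 2 * x ^ 2) ∂(gaussianReal 0 1)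
      = (Real.sqrt (1 + β))⁻¹ * rexp (a + c ^ 2 / (2 * (1 + β))) := by
  have h1β : (0:ℝ) < 1 + β := by linarith
  rw [my_integral_gaussianReal]
  simp_rw [my_pdf_mul]
  rw [integral_const_mul, my_integral_exp_quadratic (by linarith : (0:ℝ) < (1 + β) / 2)]
  have h1 : π / ((1 + β) / 2) = (2 * π) * (1 + β)⁻¹ := by field_simp
  have h2 : (4 * ((1 + β) / 2)) = 2 * (1 + β) := by ring
  have h3 : Real.sqrt (2 * π * (1 + β)⁻¹) = (Real.sqrt 2 * Real.sqrt π) * (Real.sqrt (1 + β))⁻¹ := by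
    rw [Real.sqrt_mul (by positivity), Real.sqrt_inv, Real.sqrt_mul (by norm_num : (0:ℝ) ≤ 2)]
  rw [h1, h2, h3]
  have hA : (Real.sqrt 2 * Real.sqrt π) ≠ 0 := by positivity
  field_simp
  rw [Real.sqrt_mul (by norm_num : (0:ℝ) ≤ 2)]

-- Markov
lemma my_markov {f : ℝ → ℝ}
    (hint' : Integrable (fun x => rexp (f x)) (gaussianReal 0 1))
    (hint : ∫ x, Real.exp (f x) ∂(gaussianReal 0 1) = 1) (t : ℝ) :
    gaussianReal 0 1 {x | t ≤ f x} ≤ ENNReal.ofReal (rexp (-t)) := by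
  have h2 := mul_meas_ge_le_integral_of_nonneg
    (ae_of_all _ fun x => (Real.exp_pos (f x)).le) hint' (rexp t)
  rw [hint] at h2
  have h1 : {x | t ≤ f x} = {x | rexp t ≤ rexp (f x)} := by
    ext x; simp [Real.exp_le_exp]
  rw [h1]
  have hne : gaussianReal 0 1 {x | rexp t ≤ rexp (f x)} ≠ ⊤ := measure_ne_top _ _
  rw [← ENNReal.ofReal_toReal hne]
  apply ENNReal.ofReal_le_ofReal
  rw [Real.exp_neg]
  rw [← mul_le_mul_iff_right₀ (Real.exp_pos t)]
  calc rexp t * (gaussianReal 0 1 {x | rexp t ≤ rexp (f x)}).toReal ≤ 1 := h2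
    _ = rexp t * (rexp t)⁻¹ := by rw [mul_inv_cancel₀ (Real.exp_pos t).ne']
    _ ≤ _ := le_refl _

-- key superlevel location bound
lemma my_key {f : ℝ → ℝ} {β : ℝ} (hβ : 0 ≤ β)
    (hconv : ConvexOn ℝ Set.univ (fun x => f x + β / 2 * x ^ 2))
    (hint' : Integrable (fun x => rexp (f x)) (gaussianReal 0 1))
    (hint : ∫ x, Real.exp (f x) ∂(gaussianReal 0 1) = 1)
    {t x₀ : ℝ} (hx₀ : t ≤ f x₀) :
    2 * t - Real.log (1 + β) ≤ x₀ ^ 2 := by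
  have h1β : (0:ℝ) < 1 + β := by linarith
  obtain ⟨c, hc⟩ := my_exists_subgradient hconv x₀
  obtain ⟨a, ha⟩ : ∃ a : ℝ, a = f x₀ + β / 2 * x₀ ^ 2 - c * x₀ := ⟨_, rfl⟩
  have hle : ∀ y, rexp (a + c * y - β / 2 * y ^ 2) ≤ rexp (f y) := by
    intro y
    rw [Real.exp_le_exp]
    have := hc y
    nlinarith [this, ha.le, ha.ge]
  have hmono : (Real.sqrt (1 + β))⁻¹ * rexp (a + c ^ 2 / (2 * (1 + β))) ≤ 1 := by
    rw [← my_integral_gauss_lin hβ a c, ← hint]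
    exact integral_mono (my_integrable_gauss_lin hβ a c) hint' hle
  have hsqpos : 0 < Real.sqrt (1 + β) := Real.sqrt_pos.mpr h1β
  have hexp_le : rexp (a + c ^ 2 / (2 * (1 + β))) ≤ Real.sqrt (1 + β) := by
    rw [inv_mul_le_iff₀ hsqpos, mul_one] at hmono
    exact hmono
  have hlog : a + c ^ 2 / (2 * (1 + β)) ≤ Real.log (1 + β) / 2 := by
    have := Real.log_le_log (Real.exp_pos _) hexp_le
    rwa [Real.log_exp, Real.log_sqrt h1β.le] at this
  have hclear : 2 * (1 + β) * (a + c ^ 2 / (2 * (1 + β))) ≤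
      2 * (1 + β) * (Real.log (1 + β) / 2) := by
    exact mul_le_mul_of_nonneg_left hlog (by positivity)
  have hexpand : 2 * (1 + β) * a + c ^ 2 ≤ (1 + β) * Real.log (1 + β) := by
    have h0 : 2 * (1 + β) * (a + c ^ 2 / (2 * (1 + β))) = 2 * (1 + β) * a + c ^ 2 := by
      field_simp
    rw [← h0]; linarith [hclear]
  have hat : t + β / 2 * x₀ ^ 2 - c * x₀ ≤ a := by rw [ha]; linarith [hx₀]
  have hat2 : 2 * (1 + β) * (t + β / 2 * x₀ ^ 2 - c * x₀) ≤ 2 * (1 + β) * a :=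
    mul_le_mul_of_nonneg_left hat (by positivity)
  have hfinal : (1 + β) * (2 * t - Real.log (1 + β) - x₀ ^ 2) ≤ 0 := by
    have hsq := sq_nonneg (c - (1 + β) * x₀)
    nlinarith [hsq, hexpand, hat2, sq_nonneg c, sq_nonneg x₀]
  by_contra hcon
  push_neg at hcon
  nlinarith [mul_pos h1β (show 0 < 2 * t - Real.log (1 + β) - x₀ ^ 2 by linarith)]

lemma my_intexp (s : ℝ) : ∫ x in Ioi s, x * rexp (-x ^ 2 / 2) = rexp (-s ^ 2 / 2) := by
  have hderiv : ∀ x ∈ Ioi s, HasDerivAt (fun x : ℝ => -rexp (-x ^ 2 / 2))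
      (x * rexp (-x ^ 2 / 2)) x := by
    intro x _
    have h1 : HasDerivAt (fun x : ℝ => -x ^ 2 / 2) (-x) x := by
      have h0 := ((hasDerivAt_pow 2 x).neg).div_const 2
      refine h0.congr_deriv ?_
      push_cast
      ring
    have h2 := (h1.exp).neg
    refine h2.congr_deriv ?_
    ring
  have heq : (fun x : ℝ => x * rexp (-x ^ 2 / 2)) = fun x : ℝ => x * rexp (-(1/2) * x ^ 2) := by
    funext x
    rw [show (-x ^ 2 / 2 : ℝ) = -(1/2) * x ^ 2 from by ring]
  have hint : IntegrableOn (fun x : ℝ => x * rexp (-x ^ 2 / 2)) (Ioi s) := by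
    rw [heq]
    exact (integrable_mul_exp_neg_mul_sq (by norm_num : (0:ℝ) < 1/2)).integrableOn
  have htends : Tendsto (fun x : ℝ => -rexp (-x ^ 2 / 2)) atTop (nhds 0) := by
    have h3 : Tendsto (fun x : ℝ => x ^ 2) atTop atTop := tendsto_pow_atTop two_ne_zero
    have h4 : Tendsto (fun x : ℝ => -x ^ 2) atTop atBot := tendsto_neg_atTop_atBot.comp h3
    have h5 : Tendsto (fun x : ℝ => -x ^ 2 / 2) atTop atBot := h4.atBot_div_const (by norm_num)
    have h6 := (Real.tendsto_exp_atBot.comp h5).neg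
    rwa [neg_zero] at h6
  have hcont : ContinuousWithinAt (fun x : ℝ => -rexp (-x ^ 2 / 2)) (Ici s) s := by
    apply Continuous.continuousWithinAt
    continuity
  have := integral_Ioi_of_hasDerivAt_of_tendsto hcont hderiv hint htends
  rw [this]
  ring

lemma my_tail (s : ℝ) (hs : 0 < s) :
    gaussianReal 0 1 {x : ℝ | s ≤ |x|}
      ≤ ENNReal.ofReal (2 * ((Real.sqrt (2 * π))⁻¹ * (rexp (-s ^ 2 / 2) / s))) := by
  have hIci : gaussianReal 0 1 (Ici s)
      ≤ ENNReal.ofReal ((Real.sqrt (2 * π))⁻¹ * (rexp (-s ^ 2 / 2) / s)) := by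
    rw [gaussianReal_apply_eq_integral 0 one_ne_zero]
    apply ENNReal.ofReal_le_ofReal
    have hint2 : IntegrableOn (fun x : ℝ => (Real.sqrt (2 * π))⁻¹ / s * (x * rexp (-x ^ 2 / 2)))
        (Ici s) := by
      have heq : (fun x : ℝ => x * rexp (-x ^ 2 / 2)) = fun x : ℝ => x * rexp (-(1/2) * x ^ 2) := by
        funext x
        rw [show (-x ^ 2 / 2 : ℝ) = -(1/2) * x ^ 2 from by ring]
      have base : Integrable (fun x : ℝ => x * rexp (-x ^ 2 / 2)) := by
        rw [heq]
        exact integrable_mul_exp_neg_mul_sq (by norm_num : (0:ℝ) < 1/2)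
      exact (base.const_mul _).integrableOn
    have hmono : ∫ x in Ici s, gaussianPDFReal 0 1 x
        ≤ ∫ x in Ici s, (Real.sqrt (2 * π))⁻¹ / s * (x * rexp (-x ^ 2 / 2)) := by
      refine setIntegral_mono_on (integrable_gaussianPDFReal 0 1).integrableOn hint2
        measurableSet_Ici ?_
      intro x hx
      rw [my_pdf_eq]
      have hx' : s ≤ x := hx
      have h1 : 1 ≤ x / s := (one_le_div hs).mpr hx'
      have h2 : (Real.sqrt (2 * π))⁻¹ / s * (x * rexp (-x ^ 2 / 2))
          = ((Real.sqrt (2 * π))⁻¹ * rexp (-x ^ 2 / 2)) * (x / s) := by ring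
      rw [h2]
      nth_rewrite 1 [← mul_one ((Real.sqrt (2 * π))⁻¹ * rexp (-x ^ 2 / 2))]
      exact mul_le_mul_of_nonneg_left h1 (by positivity)
    calc ∫ x in Ici s, gaussianPDFReal 0 1 x
        ≤ ∫ x in Ici s, (Real.sqrt (2 * π))⁻¹ / s * (x * rexp (-x ^ 2 / 2)) := hmono
      _ = (Real.sqrt (2 * π))⁻¹ / s * ∫ x in Ici s, x * rexp (-x ^ 2 / 2) := by
          rw [integral_const_mul]
      _ = (Real.sqrt (2 * π))⁻¹ / s * rexp (-s ^ 2 / 2) := by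
          rw [integral_Ici_eq_integral_Ioi, my_intexp]
      _ = (Real.sqrt (2 * π))⁻¹ * (rexp (-s ^ 2 / 2) / s) := by ring
  have hIic : gaussianReal 0 1 (Iic (-s)) = gaussianReal 0 1 (Ici s) := by
    have hmap := gaussianReal_map_const_mul (μ := 0) (v := 1) (-1 : ℝ)
    have hv : (NNReal.mk ((-1 : ℝ)^2) (sq_nonneg _)) * 1 = 1 := by
      ext; norm_num
    rw [hv, mul_zero] at hmap
    have hmeas : Measurable (fun x : ℝ => (-1 : ℝ) * x) := measurable_id.const_mul _
    calc gaussianReal 0 1 (Iic (-s))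
        = ((gaussianReal 0 1).map (fun x : ℝ => (-1 : ℝ) * x)) (Iic (-s)) := by rw [hmap]
      _ = gaussianReal 0 1 ((fun x : ℝ => (-1 : ℝ) * x) ⁻¹' (Iic (-s))) := by
          rw [Measure.map_apply hmeas measurableSet_Iic]
      _ = gaussianReal 0 1 (Ici s) := by
          congr 1
          ext x
          simp only [mem_preimage, mem_Iic, mem_Ici]
          constructor <;> intro h <;> linarith
  have hsub : {x : ℝ | s ≤ |x|} ⊆ Iic (-s) ∪ Ici s := by
    intro x hx
    have hx2 : s ≤ |x| := hx
    rcases le_abs.mp hx2 with h | h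
    · exact Or.inr h
    · exact Or.inl (by simpa using (by linarith : x ≤ -s))
  calc gaussianReal 0 1 {x : ℝ | s ≤ |x|}
      ≤ gaussianReal 0 1 (Iic (-s) ∪ Ici s) := measure_mono hsub
    _ ≤ gaussianReal 0 1 (Iic (-s)) + gaussianReal 0 1 (Ici s) := measure_union_le _ _
    _ = gaussianReal 0 1 (Ici s) + gaussianReal 0 1 (Ici s) := by rw [hIic]
    _ ≤ ENNReal.ofReal ((Real.sqrt (2 * π))⁻¹ * (rexp (-s ^ 2 / 2) / s))
        + ENNReal.ofReal ((Real.sqrt (2 * π))⁻¹ * (rexp (-s ^ 2 / 2) / s)) := add_le_add hIci hIci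
    _ = ENNReal.ofReal (2 * ((Real.sqrt (2 * π))⁻¹ * (rexp (-s ^ 2 / 2) / s))) := by
        rw [← ENNReal.ofReal_add (by positivity) (by positivity)]
        congr 1
        ring

set_option maxHeartbeats 1000000 in
theorem deviation_dim1_semiconvex (f : ℝ → ℝ) (β : ℝ) (hβ : 0 ≤ β)
    (hconv : ConvexOn ℝ Set.univ (fun x => f x + β / 2 * x ^ 2))
    (hint : ∫ x, Real.exp (f x) ∂(ProbabilityTheory.gaussianReal 0 1) = 1) :
    ∀ t : ℝ, 1 ≤ t →
      ProbabilityTheory.gaussianReal 0 1 {x | t ≤ f x}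
        ≤ ENNReal.ofReal ((1 + β) / Real.sqrt 2 * (Real.exp (-t) / Real.sqrt t)) := by
  intro t ht
  have h1β : (0:ℝ) < 1 + β := by linarith
  have hint' : Integrable (fun x => rexp (f x)) (gaussianReal 0 1) := by
    by_contra h
    rw [integral_undef h] at hint
    norm_num at hint
  have hr2 : (0:ℝ) < Real.sqrt 2 := Real.sqrt_pos.mpr (by norm_num)
  have hrt : (0:ℝ) < Real.sqrt t := Real.sqrt_pos.mpr (by linarith)
  have hrpi : (0:ℝ) < Real.sqrt π := Real.sqrt_pos.mpr Real.pi_pos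
  by_cases hcase : Real.sqrt (2 * t) ≤ 1 + β
  · refine le_trans (my_markov hint' hint t) (ENNReal.ofReal_le_ofReal ?_)
    rw [Real.sqrt_mul (by norm_num : (0:ℝ) ≤ 2) t] at hcase
    rw [div_mul_div_comm, le_div_iff₀ (by positivity)]
    calc rexp (-t) * (Real.sqrt 2 * Real.sqrt t)
        ≤ rexp (-t) * (1 + β) := mul_le_mul_of_nonneg_left hcase (Real.exp_pos _).le
      _ = (1 + β) * rexp (-t) := mul_comm _ _
  · push_neg at hcase
    set u := Real.log (1 + β) with hu
    have hu0 : 0 ≤ u := Real.log_nonneg (by linarith)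
    have hexpu : rexp u = 1 + β := Real.exp_log h1β
    have hult : u < Real.log (Real.sqrt (2 * t)) := Real.log_lt_log h1β hcase
    have hlsq : Real.log (Real.sqrt (2 * t)) = Real.log (2 * t) / 2 :=
      Real.log_sqrt (by linarith)
    have hlog2t : Real.log (2 * t) ≤ 2 * t - 1 := by
      have := Real.log_le_sub_one_of_pos (show (0:ℝ) < 2 * t by linarith)
      linarith
    have hu2t : u ≤ 2 * t - 1 := by
      rw [hlsq] at hult
      linarith
    have hpos : (0:ℝ) < 2 * t - u := by linarith
    set s := Real.sqrt (2 * t - u) with hsdef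
    have hspos : 0 < s := Real.sqrt_pos.mpr hpos
    have hs2 : s ^ 2 = 2 * t - u := Real.sq_sqrt hpos.le
    have hsub : {x : ℝ | t ≤ f x} ⊆ {x : ℝ | s ≤ |x|} := by
      intro x hx
      have h := my_key hβ hconv hint' hint hx
      have h2 := Real.sqrt_le_sqrt h
      rwa [Real.sqrt_sq_eq_abs] at h2
    refine le_trans (le_trans (measure_mono hsub) (my_tail s hspos))
      (ENNReal.ofReal_le_ofReal ?_)
    -- real inequality
    have hsqv : Real.sqrt (1 + β) = rexp (u / 2) := by
      have h0 : rexp (u / 2) ^ 2 = 1 + β := by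
        rw [sq, ← Real.exp_add, show u / 2 + u / 2 = u from by ring, hexpu]
      rw [← h0, Real.sqrt_sq (Real.exp_pos _).le]
    have hexps : rexp (-s ^ 2 / 2) = rexp (-t) * Real.sqrt (1 + β) := by
      rw [hs2, show (-(2 * t - u) / 2 : ℝ) = -t + u / 2 from by ring, Real.exp_add, hsqv]
    have h2π : Real.sqrt (2 * π) = Real.sqrt 2 * Real.sqrt π :=
      Real.sqrt_mul (by norm_num) π
    rw [hexps, h2π]
    -- key comparison
    have hv1 : 1 + u ≤ 1 + β := by
      have := Real.add_one_le_exp u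
      rw [hexpu] at this
      linarith
    have hP : 2 * Real.sqrt (1 + β) * Real.sqrt t ≤ (1 + β) * Real.sqrt π * s := by
      have hL : (0:ℝ) ≤ 2 * Real.sqrt (1 + β) * Real.sqrt t := by positivity
      have hR : (0:ℝ) ≤ (1 + β) * Real.sqrt π * s := by positivity
      have hsqle : (2 * Real.sqrt (1 + β) * Real.sqrt t) ^ 2
          ≤ ((1 + β) * Real.sqrt π * s) ^ 2 := by
        have e1 : (2 * Real.sqrt (1 + β) * Real.sqrt t) ^ 2 = 4 * (1 + β) * t := by
          rw [mul_pow, mul_pow, Real.sq_sqrt h1β.le, Real.sq_sqrt (by linarith : (0:ℝ) ≤ t)]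
          ring
        have e2 : ((1 + β) * Real.sqrt π * s) ^ 2 = (1 + β) ^ 2 * π * (2 * t - u) := by
          rw [mul_pow, mul_pow, Real.sq_sqrt Real.pi_pos.le, hs2]
        rw [e1, e2]
        have e3 : 2 * t ≤ (1 + β) * (2 * t - u) := by
          nlinarith [mul_nonneg hu0 (show (0:ℝ) ≤ 2 * t - 1 - u by linarith)]
        have hπ3 : (3:ℝ) < π := Real.pi_gt_three
        have e4 : 2 * t * π ≤ ((1 + β) * (2 * t - u)) * π :=
          mul_le_mul_of_nonneg_right e3 Real.pi_pos.le
        have e5 : 4 * t ≤ 2 * t * π := by nlinarith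
        have e6 : 4 * t ≤ ((1 + β) * (2 * t - u)) * π := by linarith
        have e7 := mul_le_mul_of_nonneg_left e6 h1β.le
        nlinarith [e7]
      have h3 := Real.sqrt_le_sqrt hsqle
      rwa [Real.sqrt_sq hL, Real.sqrt_sq hR] at h3
    have h2ne : (Real.sqrt 2 : ℝ) ≠ 0 := hr2.ne'
    have hπne : (Real.sqrt π : ℝ) ≠ 0 := hrpi.ne'
    have hsne : s ≠ 0 := hspos.ne'
    have htne : (Real.sqrt t : ℝ) ≠ 0 := hrt.ne'
    have hLform : 2 * ((Real.sqrt 2 * Real.sqrt π)⁻¹ * (rexp (-t) * Real.sqrt (1 + β) / s))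
        = (2 * rexp (-t) * Real.sqrt (1 + β)) / (Real.sqrt 2 * Real.sqrt π * s) := by
      field_simp
    rw [hLform, div_mul_div_comm, div_le_div_iff₀ (by positivity) (by positivity)]
    calc 2 * rexp (-t) * Real.sqrt (1 + β) * (Real.sqrt 2 * Real.sqrt t)
        = (rexp (-t) * Real.sqrt 2) * (2 * Real.sqrt (1 + β) * Real.sqrt t) := by ring
      _ ≤ (rexp (-t) * Real.sqrt 2) * ((1 + β) * Real.sqrt π * s) :=
          mul_le_mul_of_nonneg_left hP (by positivity)
      _ = (1 + β) * rexp (-t) * (Real.sqrt 2 * Real.sqrt π * s) := by ring
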